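/- Let A ≠ 1, B ≠ 0, and let (x_n) satisfy x_{n+10} = x_n/(A + B·x_n·x_{n+2}·x_{n+4}·x_{n+6}·x_{n+8}) with nonzero terms and denominators. If x_0·x_1·x_2·x_3·x_4 = (1−A)/B and x_{i+5} = x_i for i = 0,...,4, then the solution is periodic with period 5: x_{n+5} = x_n for all n. -/

import Mathlib

theorem stmt9 (A B : ℝ) (hA : A ≠ 1) (hB : B ≠ 0) (x : ℕ → ℝ)
    (hx : ∀ n, x n ≠ 0)
    (hden : ∀ n, A + B * (x n * x (n+2) * x (n+4) * x (n+6) * x (n+8)) ≠ 0)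
    (hrec : ∀ n, x (n + 10) =
      x n / (A + B * (x n * x (n+2) * x (n+4) * x (n+6) * x (n+8))))
    (hprod : x 0 * x 1 * x 2 * x 3 * x 4 = (1 - A) / B)
    (hper : ∀ i < 5, x (i + 5) = x i) :
    ∀ n, x (n + 5) = x n := by
  intro n
  induction n using Nat.strong_induction_on with
  | _ n ih =>
    rcases lt_or_ge n 5 with h | h
    · exact hper n h
    · obtain ⟨m, rfl⟩ := Nat.exists_eq_add_of_le' h
      have h0 : x (m + 5) = x m := ih m (by omega)
      have h1 : x (m + 1 + 5) = x (m + 1) := ih (m + 1) (by omega)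
      have h3 : x (m + 3 + 5) = x (m + 3) := ih (m + 3) (by omega)
      have T : ∀ j, j ≤ m →
          x j * x (j+1) * x (j+2) * x (j+3) * x (j+4) = (1 - A) / B := by
        intro j
        induction j with
        | zero => intro _; simpa using hprod
        | succ k hk =>
          intro hj
          have hk' := hk (by omega)
          have hp : x (k + 5) = x k := ih k (by omega)
          have hxk := hx k
          have key : x (k+1) * x (k+1+1) * x (k+1+2) * x (k+1+3) * x (k+1+4)
              = (x k * x (k+1) * x (k+2) * x (k+3) * x (k+4)) * (x (k+5) / x k) := by
            rw [hp]
            field_simp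
          rw [key, hk', hp]
          field_simp
      have hT := T m le_rfl
      have e6 : x (m + 6) = x (m + 1) := by
        rw [show m + 6 = m + 1 + 5 from by omega]; exact h1
      have e8 : x (m + 8) = x (m + 3) := by
        rw [show m + 8 = m + 3 + 5 from by omega]; exact h3
      have hP : x m * x (m+2) * x (m+4) * x (m+6) * x (m+8) = (1 - A) / B := by
        rw [e6, e8, ← hT]; ring
      have h10 : x (m + 10) = x m := by
        rw [hrec m, hP]
        have hden1 : A + B * ((1 - A) / B) = 1 := by field_simp; ring
        rw [hden1, div_one]
      rw [show m + 5 + 5 = m + 10 from by omega, h10, h0]
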